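/- In the diagram setup, let δₖ : Cₖ → Aₖ[1] (k = 1,2) denote the connecting morphism in the derived category D(𝒜) associated with the degreewise short exact sequence 0 → Aₖ → Bₖ → Cₖ → 0, i.e. the unique morphism in D(𝒜) satisfying δₖ ∘ pₖ′ = qₖ, where pₖ′ : Cone(iₖ) → Cₖ is the canonical quasi-isomorphism and qₖ : Cone(iₖ) → Aₖ[1] the canonical projection. Then, as morphisms C₁ → A₂[1] in the derived category D(𝒜), one has δ₂ ∘ g − e[1] ∘ δ₁ = ψ. -/

import Mathlib

open CategoryTheory CategoryTheory.Limits

variable {𝒜 : Type*} [Category 𝒜] [Abelian 𝒜]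

/-- The mapping cone of a chain map `i : A ⟶ B` of ℤ-indexed cochain complexes:
`Mⁿ = Bⁿ ⊞ Aⁿ⁺¹`, with differential `(b, a) ↦ (d b + i a, −d a)`. -/
noncomputable def paperCone {A B : CochainComplex 𝒜 ℤ} (i : A ⟶ B) :
    CochainComplex 𝒜 ℤ :=
  CochainComplex.of (fun n => B.X n ⊞ A.X (n + 1))
    (fun n => biprod.lift (biprod.fst ≫ B.d n (n + 1) + biprod.snd ≫ i.f (n + 1))
      (biprod.snd ≫ (-(A.d (n + 1) (n + 1 + 1)))))
    (fun n => by
      apply biprod.hom_ext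
      · simp [HomologicalComplex.Hom.comm]
      · simp)

/-- The canonical chain map `paperCone i ⟶ C`, `(b, a) ↦ p b`, for a degreewise
short exact sequence `0 → A → B → C → 0`. -/
noncomputable def paperConeP {A B C : CochainComplex 𝒜 ℤ} (i : A ⟶ B) (p : B ⟶ C)
    (h0 : ∀ n : ℤ, i.f n ≫ p.f n = 0) :
    paperCone i ⟶ C where
  f n := biprod.fst ≫ p.f n
  comm' n m hnm := by
    change n + 1 = m at hnm
    subst hnm
    dsimp [paperCone]
    rw [CochainComplex.of_d]
    simp [HomologicalComplex.Hom.comm, h0]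

/-- The canonical chain map `paperCone i ⟶ A[1]`, `(b, a) ↦ a`. -/
noncomputable def paperConeQ {A B : CochainComplex 𝒜 ℤ} (i : A ⟶ B) :
    paperCone i ⟶ (CategoryTheory.shiftFunctor (CochainComplex 𝒜 ℤ) (1 : ℤ)).obj A where
  f n := biprod.snd
  comm' n m hnm := by
    change n + 1 = m at hnm
    subst hnm
    dsimp [paperCone]
    rw [CochainComplex.of_d]
    simp


/-- comparison map mappingCone i ⟶ paperCone i -/
noncomputable def paperConeIsoHom {A B : CochainComplex 𝒜 ℤ} (i : A ⟶ B) :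
    CochainComplex.mappingCone i ⟶ paperCone i where
  f n := biprod.lift ((CochainComplex.mappingCone.snd i).v n n (add_zero n))
    ((CochainComplex.mappingCone.fst i : CochainComplex.HomComplex.Cochain _ _ 1).v n (n + 1) rfl)
  comm' n m hnm := by
    change n + 1 = m at hnm
    subst hnm
    dsimp [paperCone]
    rw [CochainComplex.of_d]
    rw [CochainComplex.mappingCone.ext_from_iff i (n + 1) n rfl]
    constructor
    · apply biprod.hom_ext
      · simp [CochainComplex.mappingCone.inl_v_d_assoc i (n + 1) n (n + 1 + 1) (by omega) (by omega)]
      · simp [CochainComplex.mappingCone.inl_v_d_assoc i (n + 1) n (n + 1 + 1) (by omega) (by omega)]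
    · apply biprod.hom_ext
      · simp
      · simp

instance {A B : CochainComplex 𝒜 ℤ} (i : A ⟶ B) : IsIso (paperConeIsoHom i) := by
  have : ∀ n : ℤ, IsIso ((paperConeIsoHom i).f n) := by
    intro n
    refine ⟨⟨biprod.desc ((CochainComplex.mappingCone.inr i).f n)
      ((CochainComplex.mappingCone.inl i).v (n + 1) n (by omega)), ?_, ?_⟩⟩
    · dsimp [paperConeIsoHom]
      erw [biprod.lift_desc, add_comm]
      exact CochainComplex.mappingCone.id_X i n (n + 1) rfl
    · show biprod.desc _ _ ≫ _ = 𝟙 (B.X n ⊞ A.X (n + 1))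
      dsimp [paperConeIsoHom]
      apply biprod.hom_ext' <;> apply biprod.hom_ext <;> simp
  exact HomologicalComplex.Hom.isIso_of_components _

lemma quasiIso_paperConeP {A B C : CochainComplex 𝒜 ℤ} (i : A ⟶ B) (p : B ⟶ C)
    (h0 : ∀ n : ℤ, i.f n ≫ p.f n = 0)
    (hS : ∀ n : ℤ, (ShortComplex.mk (i.f n) (p.f n) (h0 n)).ShortExact) :
    QuasiIso (paperConeP i p h0) := by
  let S : ShortComplex (CochainComplex 𝒜 ℤ) := ShortComplex.mk i p (by ext n; exact h0 n)
  have hSe : S.ShortExact :=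
    HomologicalComplex.shortExact_of_degreewise_shortExact S (fun n => hS n)
  have key : paperConeIsoHom i ≫ paperConeP i p h0
      = CochainComplex.mappingCone.descShortComplex S := by
    ext n
    apply CochainComplex.mappingCone.ext_from i (n + 1) n rfl
    · dsimp [paperConeIsoHom, paperConeP, paperCone]
      simp
      exact (CochainComplex.mappingCone.inl_v_descShortComplex_f S (n+1) n (by omega)).symm
    · dsimp [paperConeIsoHom, paperConeP, paperCone]
      simp
      exact (CochainComplex.mappingCone.inr_f_descShortComplex_f S n).symm
  have h1 : QuasiIso (paperConeIsoHom i ≫ paperConeP i p h0) := by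
    rw [key]
    exact CochainComplex.mappingCone.quasiIso_descShortComplex hSe
  exact (quasiIso_iff_comp_left (paperConeIsoHom i) (paperConeP i p h0)).1 h1

lemma paperConeMap_comm_aux {A₁ B₁ C₁ A₂ B₂ : CochainComplex 𝒜 ℤ}
    (i₁ : A₁ ⟶ B₁) (p₁ : B₁ ⟶ C₁) (i₂ : A₂ ⟶ B₂)
    (e : A₁ ⟶ A₂)
    (f : ∀ n : ℤ, B₁.X n ⟶ B₂.X n)
    (hfi : ∀ n : ℤ, i₁.f n ≫ f n = e.f n ≫ i₂.f n)
    (ψf : ∀ n : ℤ, C₁.X n ⟶ A₂.X (n + 1))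
    (hψfac : ∀ n : ℤ, p₁.f n ≫ ψf n ≫ i₂.f (n + 1)
      = B₁.d n (n + 1) ≫ f (n + 1) - f n ≫ B₂.d n (n + 1))
    (h₁ : ∀ n : ℤ, i₁.f n ≫ p₁.f n = 0) (n : ℤ)
    (hψd : C₁.d n (n + 1) ≫ ψf (n + 1) = -(ψf n ≫ A₂.d (n + 1) (n + 1 + 1))) :
    biprod.lift (biprod.fst ≫ f n) (biprod.fst ≫ p₁.f n ≫ ψf n + biprod.snd ≫ e.f (n + 1)) ≫
      biprod.lift (biprod.fst ≫ B₂.d n (n + 1) + biprod.snd ≫ i₂.f (n + 1))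
        (biprod.snd ≫ (-(A₂.d (n + 1) (n + 1 + 1))))
    = biprod.lift (biprod.fst ≫ B₁.d n (n + 1) + biprod.snd ≫ i₁.f (n + 1))
        (biprod.snd ≫ (-(A₁.d (n + 1) (n + 1 + 1)))) ≫
      biprod.lift (biprod.fst ≫ f (n + 1))
        (biprod.fst ≫ p₁.f (n + 1) ≫ ψf (n + 1) + biprod.snd ≫ e.f (n + 1 + 1)) := by
  apply biprod.hom_ext
  · simp only [biprod.lift_fst, Preadditive.comp_add, Preadditive.add_comp,
      Category.assoc, biprod.lift_fst_assoc, biprod.lift_snd_assoc,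
      Preadditive.comp_neg]
    rw [hψfac n, hfi (n + 1)]
    simp only [Preadditive.comp_sub]
    abel
  · simp only [biprod.lift_snd, Preadditive.comp_add, Preadditive.add_comp,
      Category.assoc, biprod.lift_fst_assoc, biprod.lift_snd_assoc,
      Preadditive.comp_neg, Preadditive.neg_comp]
    have hp : B₁.d n (n + 1) ≫ p₁.f (n + 1) = p₁.f n ≫ C₁.d n (n + 1) :=
      (p₁.comm n (n + 1)).symm
    have hi : i₁.f (n + 1) ≫ p₁.f (n + 1) = 0 := h₁ (n + 1)
    have he : A₁.d (n + 1) (n + 1 + 1) ≫ e.f (n + 1 + 1)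
        = e.f (n + 1) ≫ A₂.d (n + 1) (n + 1 + 1) := (e.comm _ _).symm
    rw [reassoc_of% hp, reassoc_of% hi, hψd, he]
    simp only [Preadditive.comp_neg, Preadditive.neg_comp, zero_comp, comp_zero,
      Preadditive.comp_add, Preadditive.add_comp, Category.assoc]
    abel

noncomputable def paperConeMap {A₁ B₁ C₁ A₂ B₂ : CochainComplex 𝒜 ℤ}
    (i₁ : A₁ ⟶ B₁) (p₁ : B₁ ⟶ C₁) (i₂ : A₂ ⟶ B₂)
    (e : A₁ ⟶ A₂)
    (f : ∀ n : ℤ, B₁.X n ⟶ B₂.X n)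
    (hfi : ∀ n : ℤ, i₁.f n ≫ f n = e.f n ≫ i₂.f n)
    (ψ : C₁ ⟶ (CategoryTheory.shiftFunctor (CochainComplex 𝒜 ℤ) (1 : ℤ)).obj A₂)
    (hψfac : ∀ n : ℤ, p₁.f n ≫ ψ.f n ≫ i₂.f (n + 1)
      = B₁.d n (n + 1) ≫ f (n + 1) - f n ≫ B₂.d n (n + 1))
    (h₁ : ∀ n : ℤ, i₁.f n ≫ p₁.f n = 0) :
    paperCone i₁ ⟶ paperCone i₂ where
  f n := biprod.lift (biprod.fst ≫ f n)
    (biprod.fst ≫ p₁.f n ≫ ψ.f n + biprod.snd ≫ e.f (n + 1))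
  comm' n m hnm := by
    change n + 1 = m at hnm
    subst hnm
    have hψd : C₁.d n (n + 1) ≫ ψ.f (n + 1) = -(ψ.f n ≫ A₂.d (n + 1) (n + 1 + 1)) := by
      have h := ψ.comm n (n + 1)
      rw [CochainComplex.shiftFunctor_obj_d'] at h
      simp only [Int.negOnePow_one, Units.neg_smul, one_smul, Linear.comp_units_smul] at h
      rw [← h]
      exact Preadditive.comp_neg _ _
    dsimp [paperCone]
    rw [CochainComplex.of_d, CochainComplex.of_d]
    exact paperConeMap_comm_aux i₁ p₁ i₂ e f hfi (fun n => ψ.f n) hψfac h₁ n hψd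

/-- In the diagram setup, let `δₖ : Cₖ → Aₖ[1]` (`k = 1, 2`) be the
connecting morphism in the derived category `D(𝒜)` associated with the degreewise short
exact sequence `0 → Aₖ → Bₖ → Cₖ → 0`, i.e. the unique morphism in `D(𝒜)` with
`δₖ ∘ pₖ′ = qₖ`, where `pₖ′ : Cone(iₖ) → Cₖ` is the canonical quasi-isomorphism and
`qₖ : Cone(iₖ) → Aₖ[1]` the canonical projection.  Then, in `D(𝒜)`,
`δ₂ ∘ g − e[1] ∘ δ₁ = ψ` as morphisms `C₁ → A₂[1]`. -/
theorem stmt4 [HasDerivedCategory 𝒜]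
    (A₁ B₁ C₁ A₂ B₂ C₂ : CochainComplex 𝒜 ℤ)
    (i₁ : A₁ ⟶ B₁) (p₁ : B₁ ⟶ C₁) (i₂ : A₂ ⟶ B₂) (p₂ : B₂ ⟶ C₂)
    (h₁ : ∀ n : ℤ, i₁.f n ≫ p₁.f n = 0)
    (h₂ : ∀ n : ℤ, i₂.f n ≫ p₂.f n = 0)
    (hS₁ : ∀ n : ℤ, (ShortComplex.mk (i₁.f n) (p₁.f n) (h₁ n)).ShortExact)
    (hS₂ : ∀ n : ℤ, (ShortComplex.mk (i₂.f n) (p₂.f n) (h₂ n)).ShortExact)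
    (e : A₁ ⟶ A₂) (g : C₁ ⟶ C₂)
    (f : ∀ n : ℤ, B₁.X n ⟶ B₂.X n)
    (hfi : ∀ n : ℤ, i₁.f n ≫ f n = e.f n ≫ i₂.f n)
    (hpf : ∀ n : ℤ, f n ≫ p₂.f n = p₁.f n ≫ g.f n)
    -- ψ : C₁ ⟶ A₂[1] is the (unique) morphism of complexes with i₂ⁿ⁺¹ ∘ ψⁿ ∘ p₁ⁿ = φⁿ :
    (ψ : C₁ ⟶ (CategoryTheory.shiftFunctor (CochainComplex 𝒜 ℤ) (1 : ℤ)).obj A₂)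
    (hψfac : ∀ n : ℤ, p₁.f n ≫ ψ.f n ≫ i₂.f (n + 1)
      = B₁.d n (n + 1) ≫ f (n + 1) - f n ≫ B₂.d n (n + 1))
    -- the connecting morphisms in the derived category, characterized by δₖ ∘ pₖ′ = qₖ :
    (δ₁ : DerivedCategory.Q.obj C₁ ⟶
      DerivedCategory.Q.obj ((CategoryTheory.shiftFunctor (CochainComplex 𝒜 ℤ) (1 : ℤ)).obj A₁))
    (hδ₁ : DerivedCategory.Q.map (paperConeP i₁ p₁ h₁) ≫ δ₁
      = DerivedCategory.Q.map (paperConeQ i₁))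
    (δ₂ : DerivedCategory.Q.obj C₂ ⟶
      DerivedCategory.Q.obj ((CategoryTheory.shiftFunctor (CochainComplex 𝒜 ℤ) (1 : ℤ)).obj A₂))
    (hδ₂ : DerivedCategory.Q.map (paperConeP i₂ p₂ h₂) ≫ δ₂
      = DerivedCategory.Q.map (paperConeQ i₂)) :
    DerivedCategory.Q.map g ≫ δ₂ -
      δ₁ ≫ DerivedCategory.Q.map
        ((CategoryTheory.shiftFunctor (CochainComplex 𝒜 ℤ) (1 : ℤ)).map e)
      = DerivedCategory.Q.map ψ := by
  have hq : QuasiIso (paperConeP i₁ p₁ h₁) := quasiIso_paperConeP i₁ p₁ h₁ hS₁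
  have hiso : IsIso (DerivedCategory.Q.map (paperConeP i₁ p₁ h₁)) := inferInstance
  have hFp : paperConeMap i₁ p₁ i₂ e f hfi ψ hψfac h₁ ≫ paperConeP i₂ p₂ h₂ = paperConeP i₁ p₁ h₁ ≫ g := by
    ext n
    dsimp [paperConeMap, paperConeP, paperCone]
    simp [hpf n]
  have hFq : paperConeMap i₁ p₁ i₂ e f hfi ψ hψfac h₁ ≫ paperConeQ i₂
      = paperConeP i₁ p₁ h₁ ≫ ψ +
        paperConeQ i₁ ≫ (CategoryTheory.shiftFunctor (CochainComplex 𝒜 ℤ) (1 : ℤ)).map e := by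
    ext n
    rw [HomologicalComplex.add_f_apply, HomologicalComplex.comp_f, HomologicalComplex.comp_f]
    dsimp [paperConeMap, paperConeQ, paperConeP, paperCone]
    simp
    erw [Category.assoc]
    rfl
  have e1 : DerivedCategory.Q.map (paperConeP i₁ p₁ h₁) ≫ DerivedCategory.Q.map g ≫ δ₂
      = DerivedCategory.Q.map (paperConeP i₁ p₁ h₁) ≫ DerivedCategory.Q.map ψ +
        DerivedCategory.Q.map (paperConeQ i₁) ≫
          DerivedCategory.Q.map
            ((CategoryTheory.shiftFunctor (CochainComplex 𝒜 ℤ) (1 : ℤ)).map e) := by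
    rw [← DerivedCategory.Q.map_comp_assoc, ← hFp, DerivedCategory.Q.map_comp_assoc, hδ₂,
      ← DerivedCategory.Q.map_comp, hFq, Functor.map_add, DerivedCategory.Q.map_comp,
      DerivedCategory.Q.map_comp]
  rw [← cancel_epi (DerivedCategory.Q.map (paperConeP i₁ p₁ h₁)), Preadditive.comp_sub, e1,
    reassoc_of% hδ₁]
  abel
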